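/- arXiv:2201.12435 — 3 statements merged into one kernel-verified Lean document; each statement's English description precedes it below -/
import Mathlib

section
/- Let 0 < φ, γ < 1 and let p_{xy} = φ_y(1 + κ(1 - x/γ)(1 - y/φ)) for x,y ∈ {0,1}, where φ_1 = φ, φ_0 = 1-φ. If φ + γ ≥ 1, then p_{xy} ≥ 0 for all x,y ∈ {0,1} if and only if -1 ≤ κ ≤ α/(1-α), where α = min(φ,γ). -/
theorem stmt_0 (φ γ κ : ℝ) (hφ : 0 < φ) (hφ1 : φ < 1) (hγ : 0 < γ) (hγ1 : γ < 1)
    (hsum : 1 ≤ φ + γ) :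
    (∀ x ∈ ({0, 1} : Set ℝ), ∀ y ∈ ({0, 1} : Set ℝ),
      0 ≤ (if y = 1 then φ else 1 - φ) * (1 + κ * (1 - x / γ) * (1 - y / φ))) ↔
      (-1 ≤ κ ∧ κ ≤ min φ γ / (1 - min φ γ)) := by
  have hφ0 : φ ≠ 0 := ne_of_gt hφ
  have hγ0 : γ ≠ 0 := ne_of_gt hγ
  have key1 : φ * (1 + κ * (1 - φ⁻¹)) = φ - κ * (1 - φ) := by
    field_simp
    ring
  have key2 : (1 - φ) * (1 + κ * (1 - γ⁻¹)) = (1 - φ) / γ * (γ - κ * (1 - γ)) := by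
    rw [div_mul_eq_mul_div, eq_div_iff hγ0]
    field_simp
    ring_nf
    all_goals tauto
  have key3 : φ * (1 + κ * (1 - γ⁻¹) * (1 - φ⁻¹)) =
      (1 / γ) * (γ * φ + κ * (1 - γ) * (1 - φ)) := by
    rw [div_mul_eq_mul_div, eq_div_iff hγ0]
    field_simp
    ring_nf
    all_goals tauto
  constructor
  · intro h
    have h00 := h 0 (by simp) 0 (by norm_num)
    have h01 := h 0 (by simp) 1 (by norm_num)
    have h10 := h 1 (by norm_num) 0 (by norm_num)
    norm_num at h00 h01 h10
    rw [key1] at h01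
    rw [key2] at h10
    constructor
    · nlinarith
    · rcases le_total φ γ with hc | hc
      · rw [min_eq_left hc, le_div_iff₀ (by linarith)]
        linarith
      · rw [min_eq_right hc, le_div_iff₀ (by linarith)]
        have hpos : 0 < (1 - φ) / γ := div_pos (by linarith) hγ
        nlinarith [h10]
  · rintro ⟨h1, h2⟩ x hx y hy
    have hα : κ * (1 - min φ γ) ≤ min φ γ := by
      have h1m : 0 < 1 - min φ γ := by
        rcases le_total φ γ with hc | hc
        · rw [min_eq_left hc]; linarith
        · rw [min_eq_right hc]; linarith
      calc κ * (1 - min φ γ) ≤ (min φ γ / (1 - min φ γ)) * (1 - min φ γ) := by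
            exact mul_le_mul_of_nonneg_right h2 (le_of_lt h1m)
        _ = min φ γ := by field_simp
    have hφk : κ * (1 - φ) ≤ φ := by
      rcases le_total φ γ with hc | hc
      · rw [min_eq_left hc] at hα; exact hα
      · rw [min_eq_right hc] at hα
        rcases le_total κ 0 with hk | hk <;> nlinarith
    have hγk : κ * (1 - γ) ≤ γ := by
      rcases le_total φ γ with hc | hc
      · rw [min_eq_left hc] at hα
        rcases le_total κ 0 with hk | hk <;> nlinarith
      · rw [min_eq_right hc] at hα; exact hα
    simp only [Set.mem_insert_iff, Set.mem_singleton_iff] at hx hy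
    rcases hx with rfl | rfl <;> rcases hy with rfl | rfl <;> norm_num
    · nlinarith
    · rw [key1]; linarith
    · rw [key2]
      have hpos : 0 ≤ (1 - φ) / γ := div_nonneg (by linarith) hγ.le
      nlinarith
    · rw [key3]
      have h0 : 0 ≤ (κ + 1) * ((1 - γ) * (1 - φ)) := by
        apply mul_nonneg (by linarith)
        apply mul_nonneg <;> linarith
      have : 0 ≤ γ * φ + κ * (1 - γ) * (1 - φ) := by nlinarith
      positivity
end

section
/- Let 0 < φ, γ < 1 with φ + γ < 1 and let p_{xy} = φ_y(1 + κ(1 - x/γ)(1 - y/φ)) for x,y ∈ {0,1}, where φ_1 = φ, φ_0 = 1-φ. Then p_{xy} ≥ 0 for all x,y ∈ {0,1} if and only if -φγ/((1-φ)(1-γ)) ≤ κ ≤ α/(1-α), where α = min(φ,γ). -/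
theorem stmt_1 (φ γ κ : ℝ) (hφ : 0 < φ) (hφ1 : φ < 1) (hγ : 0 < γ) (hγ1 : γ < 1)
    (hsum : φ + γ < 1) :
    (∀ x ∈ ({0, 1} : Set ℝ), ∀ y ∈ ({0, 1} : Set ℝ),
      0 ≤ (if y = 1 then φ else 1 - φ) * (1 + κ * (1 - x / γ) * (1 - y / φ))) ↔
      (-(φ * γ) / ((1 - φ) * (1 - γ)) ≤ κ ∧ κ ≤ min φ γ / (1 - min φ γ)) := by
  have hφ' : (0:ℝ) < 1 - φ := by linarith
  have hγ' : (0:ℝ) < 1 - γ := by linarith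
  have hD : (0:ℝ) < (1 - φ) * (1 - γ) := mul_pos hφ' hγ'
  have h0 : (0:ℝ) ∈ ({0, 1} : Set ℝ) := by norm_num
  have h1m : (1:ℝ) ∈ ({0, 1} : Set ℝ) := by norm_num
  have e11 : φ * (1 + κ * (1 - 1 / γ) * (1 - 1 / φ))
      = (φ * γ + κ * ((1 - φ) * (1 - γ))) / γ := by
    field_simp; ring
  have e01 : φ * (1 + κ * (1 - 0 / γ) * (1 - 1 / φ)) = φ - κ * (1 - φ) := by
    rw [zero_div]; field_simp; ring
  have e10 : (1 - φ) * (1 + κ * (1 - 1 / γ) * (1 - 0 / φ))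
      = (1 - φ) * (γ - κ * (1 - γ)) / γ := by
    rw [zero_div, sub_zero, eq_div_iff (ne_of_gt hγ)]; field_simp
    ring
  have e00 : (1 - φ) * (1 + κ * (1 - 0 / γ) * (1 - 0 / φ)) = (1 - φ) * (1 + κ) := by
    rw [zero_div, zero_div]; ring
  constructor
  · intro h
    have h01 := h 0 h0 1 h1m
    have h10 := h 1 h1m 0 h0
    have h11 := h 1 h1m 1 h1m
    rw [if_pos rfl] at h01 h11
    rw [if_neg (by norm_num : ¬ (0:ℝ) = 1)] at h10
    rw [e01] at h01
    rw [e10, le_div_iff₀ hγ] at h10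
    rw [e11, le_div_iff₀ hγ] at h11
    constructor
    · rw [div_le_iff₀ hD]; nlinarith [h11]
    · rcases min_cases φ γ with ⟨hm, hle⟩ | ⟨hm, hle⟩
      · rw [hm, le_div_iff₀ hφ']; linarith
      · rw [hm, le_div_iff₀ hγ']; nlinarith [h10]
  · rintro ⟨hlo, hhi⟩
    have hlo' : -(φ * γ) ≤ κ * ((1 - φ) * (1 - γ)) := (div_le_iff₀ hD).mp hlo
    have hκφ : κ * (1 - φ) ≤ φ := by
      rcases min_cases φ γ with ⟨hm, hle⟩ | ⟨hm, hle⟩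
      · rw [hm, le_div_iff₀ hφ'] at hhi; linarith
      · rw [hm, le_div_iff₀ hγ'] at hhi; nlinarith
    have hκγ : κ * (1 - γ) ≤ γ := by
      rcases min_cases φ γ with ⟨hm, hle⟩ | ⟨hm, hle⟩
      · rw [hm, le_div_iff₀ hφ'] at hhi; nlinarith
      · rw [hm, le_div_iff₀ hγ'] at hhi; linarith
    have hneg1 : -1 ≤ κ := by nlinarith
    intro x hx y hy
    rcases hx with hx | hx <;> rcases hy with hy | hy <;>
        simp only [Set.mem_singleton_iff, Set.mem_insert_iff] at * <;> subst hx <;> subst hy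
    · rw [if_neg (by norm_num : ¬ (0:ℝ) = 1), e00]; nlinarith
    · rw [if_pos rfl, e01]; linarith
    · rw [if_neg (by norm_num : ¬ (0:ℝ) = 1), e10]
      apply div_nonneg _ hγ.le
      nlinarith
    · rw [if_pos rfl, e11]
      apply div_nonneg _ hγ.le
      linarith
end

section
/- Fixed point identity for the limiting Bernoulli parameter: let φ, γ ∈ (0,1), φ + γ > 1, α = min(φ,γ), ψ as defined, and Z : ℕ → {0,1}. Define p = φ - (γ-φ)Σ_{l=1}^∞ ψ^l ∏_{j=1}^l (1 - Z_j/α). Let z₀ ∈ {0,1} and define Z# by Z#_1 = z₀, Z#_j = Z_{j-1} for j ≥ 2, and p# = φ - (γ-φ)Σ_{l=1}^∞ ψ^l ∏_{j=1}^l (1 - Z#_j/α). Then p# = φ - γψ(1 - z₀/α)(1 - p/γ). -/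
theorem stmt_11 (φ γ : ℝ) (hφ : 0 < φ) (hφ1 : φ < 1) (hγ : 0 < γ) (hγ1 : γ < 1)
    (hsum : 1 < φ + γ) (α ψ : ℝ) (hα : α = min φ γ)
    (hψ : ψ = if φ ≤ γ then φ / γ else (1 - φ) / (1 - γ))
    (Z : ℕ → ℕ) (hZ : ∀ j, Z j = 0 ∨ Z j = 1)
    (z₀ : ℕ) (hz₀ : z₀ = 0 ∨ z₀ = 1)
    (Zs : ℕ → ℕ) (hZs0 : Zs 0 = z₀) (hZsS : ∀ j, Zs (j + 1) = Z j)
    (p ps : ℝ)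
    (hp : p = φ - (γ - φ) *
      ∑' l : ℕ, ψ ^ (l + 1) * ∏ j ∈ Finset.range (l + 1), (1 - (Z j : ℝ) / α))
    (hps : ps = φ - (γ - φ) *
      ∑' l : ℕ, ψ ^ (l + 1) * ∏ j ∈ Finset.range (l + 1), (1 - (Zs j : ℝ) / α)) :
    ps = φ - γ * ψ * (1 - (z₀ : ℝ) / α) * (1 - p / γ) := by
  have hα0 : 0 < α := by rw [hα]; exact lt_min hφ hγ
  have hα1 : α ≤ 1 := by rw [hα]; exact (min_le_left _ _).trans hφ1.le
  have hγ0 : (γ : ℝ) ≠ 0 := ne_of_gt hγ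
  by_cases hfg : φ = γ
  · subst hfg
    simp only [sub_self, zero_mul, sub_zero] at hp hps
    rw [hps, hp]
    field_simp
    ring
  · -- main case
    set u : ℕ → ℝ := fun l => ψ ^ l * ∏ j ∈ Finset.range l, (1 - (Z j : ℝ) / α) with hu
    have hψ0 : 0 ≤ ψ := by
      rw [hψ]; split
      · positivity
      · have : γ < φ := lt_of_not_ge (by assumption)
        apply div_nonneg <;> linarith
    set M : ℝ := max 1 (1 / α - 1) with hM
    have hM0 : 0 ≤ M := le_trans zero_le_one (le_max_left _ _)
    set r : ℝ := ψ * M with hr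
    have hfac : ∀ j, |1 - (Z j : ℝ) / α| ≤ M := by
      intro j
      rcases hZ j with h | h <;> rw [h]
      · simp only [Nat.cast_zero, zero_div, sub_zero, abs_one, hM]
        exact le_max_left _ _
      · have h1 : (1:ℝ) ≤ 1 / α := one_le_one_div hα0 hα1
        rw [Nat.cast_one, abs_of_nonpos (by linarith), neg_sub]
        exact le_max_right _ _
    have hbound : ∀ l, ‖u l‖ ≤ r ^ l := by
      intro l
      rw [hu]
      simp only [Real.norm_eq_abs, abs_mul, hr, mul_pow]
      gcongr
      · rw [abs_pow, abs_of_nonneg hψ0]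
      · calc |∏ j ∈ Finset.range l, (1 - (Z j : ℝ) / α)|
            ≤ ∏ j ∈ Finset.range l, |1 - (Z j : ℝ) / α| := (Finset.abs_prod _ _).le
          _ ≤ ∏ _j ∈ Finset.range l, M := Finset.prod_le_prod (fun _ _ => abs_nonneg _)
              (fun j _ => hfac j)
          _ = M ^ l := by rw [Finset.prod_const, Finset.card_range]
    have hr1 : r < 1 := by
      have key : ψ < 1 ∧ ψ * (1 / α - 1) < 1 := by
        rcases lt_or_gt_of_ne hfg with h | h
        · have hle : φ ≤ γ := h.le
          have hαφ : α = φ := by rw [hα, min_eq_left hle]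
          rw [hψ, if_pos hle, hαφ]
          constructor
          · exact (div_lt_one hγ).mpr h
          · have : φ / γ * (1 / φ - 1) = (1 - φ) / γ := by field_simp
            rw [this]
            exact (div_lt_one hγ).mpr (by linarith)
        · have hle : ¬ φ ≤ γ := not_le.mpr h
          have hαγ : α = γ := by rw [hα, min_eq_right h.le]
          rw [hψ, if_neg hle, hαγ]
          constructor
          · exact (div_lt_one (by linarith)).mpr (by linarith)
          · have hne : (1:ℝ) - γ ≠ 0 := by linarith
            have key : (1 - φ) / (1 - γ) * (1 / γ - 1) = (1 - φ) / γ := by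
              field_simp
            rw [key]
            exact (div_lt_one hγ).mpr (by linarith)
      rw [hr, hM, mul_max_of_nonneg _ _ hψ0]
      exact max_lt (by simpa using key.1) key.2
    have hsu : Summable u :=
      Summable.of_norm_bounded (summable_geometric_of_lt_one (by positivity) hr1) hbound
    have hT : ∑' l, u l = 1 + ∑' l, ψ ^ (l + 1) * ∏ j ∈ Finset.range (l + 1),
        (1 - (Z j : ℝ) / α) := by
      rw [Summable.tsum_eq_zero_add hsu]
      simp [hu]
    have hterm : ∀ l, ψ ^ (l + 1) * ∏ j ∈ Finset.range (l + 1), (1 - (Zs j : ℝ) / α)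
        = (ψ * (1 - (z₀ : ℝ) / α)) * u l := by
      intro l
      rw [hu]
      rw [Finset.prod_range_succ']
      have : ∀ j ∈ Finset.range l, (1 - (Zs (j + 1) : ℝ) / α) = (1 - (Z j : ℝ) / α) := by
        intro j _; rw [hZsS]
      rw [Finset.prod_congr rfl this, hZs0]
      ring
    have hps' : ps = φ - (γ - φ) * ((ψ * (1 - (z₀ : ℝ) / α)) *
        (1 + ∑' l, ψ ^ (l + 1) * ∏ j ∈ Finset.range (l + 1), (1 - (Z j : ℝ) / α))) := by
      rw [hps]
      congr 1
      rw [tsum_congr hterm, tsum_mul_left, hT]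
    rw [hps', hp]
    field_simp
    ring
end
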